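/- NAC descent step with Fisher preconditioning: Let F be a d×d real symmetric matrix with λ_min I ⪯ F ⪯ C² I for λ_min > 0, let J : ℝ^d → ℝ be differentiable with L-Lipschitz gradient, and set θ̄* = F⁻¹ ∇J(ω). For the update ω' = ω + β θ with ‖θ‖ ≤ B and β > 0, we have J(ω') ≥ J(ω) + (β/(2C²))‖∇J(ω)‖² − C² β ‖θ − θ̄*‖² − (L B² β²)/2. -/

import Mathlib

open scoped RealInnerProductSpace

/-- Descent lemma (lower-bound form). -/
lemma descent_lemma_aux {d : ℕ} (L : ℝ)
    (J : EuclideanSpace ℝ (Fin d) → ℝ) (hJ : Differentiable ℝ J)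
    (hLip : ∀ x y, ‖gradient J x - gradient J y‖ ≤ L * ‖x - y‖)
    (ω v : EuclideanSpace ℝ (Fin d)) :
    J (ω + v) ≥ J ω + ⟪gradient J ω, v⟫ - L * ‖v‖ ^ 2 / 2 := by
  set g : ℝ → ℝ := fun t => J (ω + t • v) - t * ⟪gradient J ω, v⟫ + L * ‖v‖ ^ 2 * t ^ 2 / 2 with hg
  have hderiv : ∀ t : ℝ, HasDerivAt g
      (⟪gradient J (ω + t • v), v⟫ - ⟪gradient J ω, v⟫ + L * ‖v‖ ^ 2 * t) t := by
    intro t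
    have h1 : HasDerivAt (fun t : ℝ => ω + t • v) v t := by
      simpa using ((hasDerivAt_id t).smul_const v).const_add ω
    have h2 : HasDerivAt (fun t : ℝ => J (ω + t • v)) ⟪gradient J (ω + t • v), v⟫ t := by
      simpa [Function.comp_def] using ((hJ (ω + t • v)).hasGradientAt.hasFDerivAt).comp_hasDerivAt t h1
    have h3 : HasDerivAt (fun t : ℝ => t * ⟪gradient J ω, v⟫) ⟪gradient J ω, v⟫ t := by
      simpa using (hasDerivAt_id t).mul_const ⟪gradient J ω, v⟫
    have h4 : HasDerivAt (fun t : ℝ => L * ‖v‖ ^ 2 * t ^ 2 / 2) (L * ‖v‖ ^ 2 * t) t := by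
      have := ((hasDerivAt_pow 2 t).const_mul (L * ‖v‖ ^ 2)).div_const 2
      exact this.congr_deriv (by rw [Nat.cast_ofNat, show (2:ℕ) - 1 = 1 from rfl, pow_one]; ring)
    exact (h2.sub h3).add h4
  have hmono : MonotoneOn g (Set.Icc 0 1) := by
    apply monotoneOn_of_deriv_nonneg (convex_Icc 0 1)
    · exact Continuous.continuousOn (by
        have : ∀ t, ContinuousAt g t := fun t => (hderiv t).continuousAt
        exact continuous_iff_continuousAt.2 this)
    · intro t ht
      exact (hderiv t).differentiableAt.differentiableWithinAt
    · intro t ht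
      rw [(hderiv t).deriv]
      replace ht : 0 < t ∧ t < 1 := by simpa using ht
      have key : ⟪gradient J (ω + t • v) - gradient J ω, v⟫ ≥ -(L * t * ‖v‖ ^ 2) := by
        have h5 := abs_real_inner_le_norm (gradient J (ω + t • v) - gradient J ω) v
        have h6 := hLip (ω + t • v) ω
        have h7 : ‖ω + t • v - ω‖ = t * ‖v‖ := by
          rw [add_sub_cancel_left, norm_smul, Real.norm_eq_abs, abs_of_pos ht.1]
        rw [h7] at h6
        have := neg_abs_le ⟪gradient J (ω + t • v) - gradient J ω, v⟫
        nlinarith [norm_nonneg v, mul_le_mul_of_nonneg_right h6 (norm_nonneg v)]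
      have heq : ⟪gradient J (ω + t • v) - gradient J ω, v⟫
          = ⟪gradient J (ω + t • v), v⟫ - ⟪gradient J ω, v⟫ := by
        rw [inner_sub_left]
      linarith [key, heq.le, heq.ge]
  have h01 := hmono (Set.left_mem_Icc.2 zero_le_one) (Set.right_mem_Icc.2 zero_le_one) zero_le_one
  simp only [hg, zero_smul, add_zero, zero_mul, one_smul, one_mul, one_pow, mul_one,
    sub_zero] at h01
  nlinarith [h01]

set_option maxHeartbeats 1000000 in
/-- NAC descent step with Fisher preconditioning: let F be a
symmetric positive operator with λ_min I ⪯ F ⪯ C² I (λ_min > 0), J be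
differentiable with L-Lipschitz gradient, and θ̄* = F⁻¹∇J(ω) (i.e. Fθ̄* = ∇J(ω)).
Then for ω' = ω + βθ with ‖θ‖ ≤ B and β > 0,
J(ω') ≥ J(ω) + (β/(2C²))‖∇J(ω)‖² − C²β‖θ − θ̄*‖² − LB²β²/2. -/
theorem nac_descent_step {d : ℕ}
    (F : EuclideanSpace ℝ (Fin d) →L[ℝ] EuclideanSpace ℝ (Fin d))
    (lmin C L B β : ℝ) (hlmin : 0 < lmin) (hL : 0 ≤ L)
    (hsymm : ∀ x y, ⟪F x, y⟫ = ⟪x, F y⟫)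
    (hlow : ∀ x, lmin * ‖x‖ ^ 2 ≤ ⟪x, F x⟫)
    (hup : ∀ x, ⟪x, F x⟫ ≤ C ^ 2 * ‖x‖ ^ 2)
    (J : EuclideanSpace ℝ (Fin d) → ℝ) (hJ : Differentiable ℝ J)
    (hLip : ∀ x y, ‖gradient J x - gradient J y‖ ≤ L * ‖x - y‖)
    (ω θ θbar : EuclideanSpace ℝ (Fin d))
    (hθbar : F θbar = gradient J ω) (hθ : ‖θ‖ ≤ B) (hβ : 0 < β) :
    J (ω + β • θ) ≥ J ω + (β / (2 * C ^ 2)) * ‖gradient J ω‖ ^ 2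
      - C ^ 2 * β * ‖θ - θbar‖ ^ 2 - L * B ^ 2 * β ^ 2 / 2 := by
  have hB : 0 ≤ B := le_trans (norm_nonneg θ) hθ
  rcases Nat.eq_zero_or_pos d with hd | hd
  · subst hd
    have hz : ∀ x : EuclideanSpace ℝ (Fin 0), x = 0 := fun x => Subsingleton.elim x 0
    rw [hz (β • θ), add_zero, hz (gradient J ω), hz (θ - θbar)]
    have hnn : 0 ≤ L * B ^ 2 * β ^ 2 / 2 := by
      have := mul_nonneg (mul_nonneg hL (sq_nonneg B)) (sq_nonneg β)
      linarith
    simp only [norm_zero]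
    nlinarith
  · have hC2 : 0 < C ^ 2 := by
      set x0 : EuclideanSpace ℝ (Fin d) := EuclideanSpace.single (⟨0, hd⟩ : Fin d) (1:ℝ)
      have hx0 : ‖x0‖ = 1 := by simp [x0, EuclideanSpace.norm_single]
      have h1 := hlow x0
      have h2 := hup x0
      rw [hx0] at h1 h2
      nlinarith
    set g := gradient J ω with hgdef
    clear_value g
    -- key inequality: ⟪g, θbar⟫ ≥ ‖g‖² / C²
    have hkey : ⟪g, θbar⟫ ≥ ‖g‖ ^ 2 / C ^ 2 := by
      set s : ℝ := 1 / C ^ 2 with hs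
      have hs0 : 0 ≤ s := by positivity
      set y : EuclideanSpace ℝ (Fin d) := θbar - s • g with hy
      have h0 : (0:ℝ) ≤ ⟪y, F y⟫ := le_trans (by positivity) (hlow y)
      have hFy : F y = g - s • F g := by
        rw [hy, map_sub, map_smul, hθbar]
      have hexp : ⟪y, F y⟫ = ⟪θbar, g⟫ - 2 * s * ‖g‖ ^ 2 + s ^ 2 * ⟪g, F g⟫ := by
        rw [hy, hFy]
        simp only [inner_sub_left, inner_sub_right, real_inner_smul_left, real_inner_smul_right]
        have e1 : ⟪θbar, F g⟫ = ⟪g, g⟫ := by rw [← hsymm, hθbar]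
        rw [e1, real_inner_self_eq_norm_sq]
        ring
      have hup' := hup g
      have hsym' : ⟪g, θbar⟫ = ⟪θbar, g⟫ := real_inner_comm θbar g
      rw [hexp] at h0
      have h7 : s ^ 2 * ⟪g, F g⟫ ≤ s ^ 2 * (C ^ 2 * ‖g‖ ^ 2) :=
        mul_le_mul_of_nonneg_left hup' (sq_nonneg s)
      have h8 : s ^ 2 * (C ^ 2 * ‖g‖ ^ 2) = s * ‖g‖ ^ 2 := by
        rw [hs]; field_simp
      have h9 : ⟪θbar, g⟫ ≥ s * ‖g‖ ^ 2 := by linarith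
      have h10 : s * ‖g‖ ^ 2 = ‖g‖ ^ 2 / C ^ 2 := by rw [hs]; ring
      linarith [hsym'.le, hsym'.ge]
    -- Young's inequality
    have hyoung : ⟪g, θ - θbar⟫ ≥ -(‖g‖ ^ 2 / (4 * C ^ 2) + C ^ 2 * ‖θ - θbar‖ ^ 2) := by
      have h1 := abs_real_inner_le_norm g (θ - θbar)
      have h2 := neg_abs_le ⟪g, θ - θbar⟫
      have h3 : ‖g‖ * ‖θ - θbar‖ * (4 * C ^ 2)
          ≤ ‖g‖ ^ 2 + C ^ 2 * ‖θ - θbar‖ ^ 2 * (4 * C ^ 2) := by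
        nlinarith [sq_nonneg (‖g‖ - 2 * C ^ 2 * ‖θ - θbar‖)]
      have h4 : ‖g‖ * ‖θ - θbar‖ ≤ (‖g‖ ^ 2 + C ^ 2 * ‖θ - θbar‖ ^ 2 * (4 * C ^ 2)) / (4 * C ^ 2) :=
        (le_div_iff₀ (by positivity)).2 h3
      have h5 : (‖g‖ ^ 2 + C ^ 2 * ‖θ - θbar‖ ^ 2 * (4 * C ^ 2)) / (4 * C ^ 2)
          = ‖g‖ ^ 2 / (4 * C ^ 2) + C ^ 2 * ‖θ - θbar‖ ^ 2 := by
        field_simp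
      linarith
    have hinner : ⟪g, θ⟫ ≥ ‖g‖ ^ 2 / (2 * C ^ 2) - C ^ 2 * ‖θ - θbar‖ ^ 2 := by
      have hsplit : ⟪g, θ⟫ = ⟪g, θbar⟫ + ⟪g, θ - θbar⟫ := by
        rw [← inner_add_right]
        congr 1
        abel
      have hfrac : ‖g‖ ^ 2 / C ^ 2 - ‖g‖ ^ 2 / (4 * C ^ 2) - ‖g‖ ^ 2 / (2 * C ^ 2)
          = ‖g‖ ^ 2 / (4 * C ^ 2) := by
        field_simp
        ring
      have hnn : 0 ≤ ‖g‖ ^ 2 / (4 * C ^ 2) := by positivity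
      rw [hsplit]
      linarith
    have hdesc := descent_lemma_aux L J hJ hLip ω (β • θ)
    rw [norm_smul, real_inner_smul_right, Real.norm_eq_abs, abs_of_pos hβ, ← hgdef] at hdesc
    have hθ2 : ‖θ‖ ^ 2 ≤ B ^ 2 := by nlinarith [norm_nonneg θ]
    have hmul : β * ⟪g, θ⟫ ≥ β * (‖g‖ ^ 2 / (2 * C ^ 2) - C ^ 2 * ‖θ - θbar‖ ^ 2) :=
      mul_le_mul_of_nonneg_left hinner hβ.le
    have hLB : L * (β * ‖θ‖) ^ 2 / 2 ≤ L * B ^ 2 * β ^ 2 / 2 := by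
      nlinarith [mul_nonneg (mul_nonneg hL (sq_nonneg β)) (sub_nonneg.2 hθ2)]
    have hfin : β * (‖g‖ ^ 2 / (2 * C ^ 2) - C ^ 2 * ‖θ - θbar‖ ^ 2)
        = (β / (2 * C ^ 2)) * ‖g‖ ^ 2 - C ^ 2 * β * ‖θ - θbar‖ ^ 2 := by ring
    linarith [hdesc, hmul, hfin.le, hfin.ge]
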